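/- arXiv:2106.12453 — 3 statements merged into one kernel-verified Lean document; each statement's English description precedes it below -/
import Mathlib

section
/- Let M be a matroid on a finite ground set E and let B and B' be bases of M. Then there exists a bijection σ from B to B' such that for every element e ∈ B, the set (B \ {e}) ∪ {σ(e)} is a basis of M. -/
open Set

/-- Exchange characterization: for a base `B`, `e ∈ B`, `f ∈ E`,
`insert f (B \ {e})` is a base iff `f ∉ cl (B \ {e})`. -/
lemma bbe_base_iff {α : Type*} {M : Matroid α} {B : Set α} (hB : M.IsBase B)
    {e f : α} (he : e ∈ B) (hf : f ∈ M.E) :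
    M.IsBase (insert f (B \ {e})) ↔ f ∉ M.closure (B \ {e}) := by
  have hBd : M.Indep (B \ {e}) := hB.indep.subset diff_subset
  constructor
  · intro h hcl
    have hfB : f ∉ B \ {e} := by
      intro hfBe
      rw [insert_eq_of_mem hfBe] at h
      have := h.eq_of_subset_indep hB.indep diff_subset
      exact (this ▸ (fun (hh : e ∈ B \ {e}) => hh.2 rfl)) (this ▸ he)
    have := (hBd.insert_indep_iff_of_notMem hfB).mp h.indep
    exact this.2 hcl
  · intro h
    have hfB : f ∉ B \ {e} := fun hfBe => h (M.subset_closure _ hBd.subset_ground hfBe)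
    have hind : M.Indep (insert f (B \ {e})) :=
      (hBd.insert_indep_iff_of_notMem hfB).mpr ⟨hf, h⟩
    by_cases hfe : f = e
    · subst hfe
      rwa [insert_diff_singleton, insert_eq_of_mem he]
    · have hfB' : f ∉ B := fun hfB' => hfB ⟨hfB', hfe⟩
      exact hB.exchange_isBase_of_indep hfB' hind

/-- If `f` is in the closure of `B \ {e}` for every `e ∈ X` (with `X` a nonempty finite
subset of the independent set `B`), then `f ∈ cl (B \ X)`. -/
lemma bbe_closure_inter {α : Type*} {M : Matroid α} {B : Set α} (hB : M.Indep B)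
    {X : Set α} (hX : X.Finite) {f : α} :
    X ⊆ B → X.Nonempty → (∀ e ∈ X, f ∈ M.closure (B \ {e})) → f ∈ M.closure (B \ X) := by
  refine Set.Finite.induction_on
    (motive := fun X _ => X ⊆ B → X.Nonempty → (∀ e ∈ X, f ∈ M.closure (B \ {e})) →
      f ∈ M.closure (B \ X)) X hX (fun _ h => absurd h (by simp)) ?_
  rintro e X' heX' hX' ih hXB - hcl
  have heB : e ∈ B := hXB (mem_insert _ _)
  rcases X'.eq_empty_or_nonempty with rfl | hne
  · simpa using hcl e (mem_insert _ _)
  · have hfX' : f ∈ M.closure (B \ X') :=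
      ih (subset_trans (subset_insert _ _) hXB) hne
        (fun x hx => hcl x (mem_insert_of_mem _ hx))
    have hfe : f ∈ M.closure (B \ {e}) := hcl e (mem_insert _ _)
    set A := B \ X' with hA
    have heA : e ∈ A := ⟨heB, heX'⟩
    have hins : insert e (A \ {e}) = A := insert_diff_singleton.trans (insert_eq_of_mem heA)
    by_contra hcon
    have hcon' : f ∉ M.closure (A \ {e}) := by
      rwa [show A \ {e} = B \ insert e X' by rw [hA, diff_diff_comm, diff_diff, singleton_union]]
    have hmem : f ∈ M.closure (insert e (A \ {e})) \ M.closure (A \ {e}) :=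
      ⟨by rw [hins]; exact hfX', hcon'⟩
    have hex := Matroid.closure_exchange hmem
    have hsub : insert f (A \ {e}) ⊆ insert f (B \ {e}) :=
      insert_subset_insert (diff_subset_diff_left diff_subset)
    have : e ∈ M.closure (insert f (B \ {e})) := (M.closure_subset_closure hsub) hex.1
    rw [Matroid.closure_insert_eq_of_mem_closure hfe] at this
    exact hB.notMem_closure_diff_of_mem heB this

/-- Counting lemma (Hall condition core): for `X ⊆ B`, `|X| ≤ |B' \ cl (B \ X)|`. -/
lemma bbe_count {α : Type*} {M : Matroid α} (hE : M.E.Finite) {B B' : Set α}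
    (hB : M.IsBase B) (hB' : M.IsBase B') {X : Set α} (hXB : X ⊆ B) :
    X.ncard ≤ (B' \ M.closure (B \ X)).ncard := by
  set S := B' \ M.closure (B \ X) with hS
  have hBE : B ⊆ M.E := hB.subset_ground
  have hB'E : B' ⊆ M.E := hB'.subset_ground
  have hUE : (B \ X) ∪ S ⊆ M.E := union_subset (diff_subset.trans hBE) (diff_subset.trans hB'E)
  have hsp : M.Spanning ((B \ X) ∪ S) := by
    rw [M.spanning_iff_closure_eq hUE]
    refine subset_antisymm (M.closure_subset_ground _) ?_
    rw [← hB'.closure_eq]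
    refine M.closure_subset_closure_of_subset_closure (fun g hg => ?_)
    by_cases hgc : g ∈ M.closure (B \ X)
    · exact M.closure_subset_closure subset_union_left hgc
    · exact M.subset_closure _ hUE (Or.inr ⟨hg, hgc⟩)
  obtain ⟨B₂, hB₂, hB₂sub⟩ := hsp.exists_isBase_subset
  have hcard : B₂.ncard = B.ncard := hB₂.ncard_eq_ncard_of_isBase hB
  have hBfin : B.Finite := hE.subset hBE
  have hXfin : X.Finite := hBfin.subset hXB
  have hSfin : S.Finite := (hE.subset hB'E).subset diff_subset
  have h1 : B₂.ncard ≤ (B \ X).ncard + S.ncard :=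
    le_trans (ncard_le_ncard hB₂sub ((hBfin.diff (t := X)).union hSfin)) (ncard_union_le _ _)
  have h2 : (B \ X).ncard = B.ncard - X.ncard := ncard_diff hXB hXfin
  have h3 : X.ncard ≤ B.ncard := ncard_le_ncard hXB hBfin
  omega

/-- **Bijective basis exchange.** For any two bases `B, B'` of a matroid `M` on a finite
ground set, there is a bijection `σ : B → B'` such that for every `e ∈ B`,
`(B \ {e}) ∪ {σ(e)}` is again a basis of `M`. -/
theorem bijective_basis_exchange {α : Type*} (M : Matroid α) (hE : M.E.Finite)
    (B B' : Set α) (hB : M.IsBase B) (hB' : M.IsBase B') :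
    ∃ σ : B → B', Function.Bijective σ ∧
      ∀ e : B, M.IsBase (insert ((σ e : α)) (B \ {(e : α)})) := by
  classical
  have hBE : B ⊆ M.E := hB.subset_ground
  have hB'E : B' ⊆ M.E := hB'.subset_ground
  have hBfin : B.Finite := hE.subset hBE
  have hB'fin : B'.Finite := hE.subset hB'E
  haveI : Fintype ↥B := hBfin.fintype
  haveI : Fintype ↥B' := hB'fin.fintype
  set t : ↥B → Finset α :=
    fun e => hB'fin.toFinset.filter (fun f => M.IsBase (insert f (B \ {(e : α)}))) with ht
  have hall : ∀ s : Finset ↥B, s.card ≤ (s.biUnion t).card := by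
    intro s
    rcases s.eq_empty_or_nonempty with rfl | hs
    · simp
    set X : Set α := ↑(s.image Subtype.val) with hX
    have hXB : X ⊆ B := by
      intro x hx
      simp only [hX, Finset.coe_image, mem_image] at hx
      obtain ⟨⟨y, hy⟩, _, rfl⟩ := hx
      exact hy
    have hXne : X.Nonempty := by
      obtain ⟨e, he⟩ := hs
      exact ⟨e.val, by simp only [hX, Finset.coe_image]; exact mem_image_of_mem _ he⟩
    have hsub : B' \ M.closure (B \ X) ⊆ ↑(s.biUnion t) := by
      intro f hf
      have hfE : f ∈ M.E := hB'E hf.1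
      have : ∃ e ∈ X, f ∉ M.closure (B \ {e}) := by
        by_contra hcon
        push_neg at hcon
        exact hf.2 (bbe_closure_inter hB.indep (hBfin.subset hXB) hXB hXne hcon)
      obtain ⟨e, heX, hecl⟩ := this
      have heB : e ∈ B := hXB heX
      have hbase : M.IsBase (insert f (B \ {e})) := (bbe_base_iff hB heB hfE).mpr hecl
      have hes : (⟨e, heB⟩ : ↥B) ∈ s := by
        simp only [hX, Finset.coe_image, mem_image] at heX
        obtain ⟨y, hy, hye⟩ := heX
        have : y = ⟨e, heB⟩ := Subtype.ext hye
        exact this ▸ hy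
      simp only [Finset.coe_biUnion, mem_iUnion]
      exact ⟨⟨e, heB⟩, hes, by simp [ht, Set.Finite.mem_toFinset]; exact ⟨hf.1, hbase⟩⟩
    calc s.card = X.ncard := by
          rw [hX, ncard_coe_finset, Finset.card_image_of_injective _ Subtype.val_injective]
      _ ≤ (B' \ M.closure (B \ X)).ncard := bbe_count hE hB hB' hXB
      _ ≤ (↑(s.biUnion t) : Set α).ncard :=
          ncard_le_ncard hsub (s.biUnion t).finite_toSet
      _ = (s.biUnion t).card := ncard_coe_finset _
  obtain ⟨g, hginj, hgmem⟩ := (Finset.all_card_le_biUnion_card_iff_existsInjective' t).mp hall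
  have hgB' : ∀ e : ↥B, g e ∈ B' := by
    intro e
    have := hgmem e
    simp only [ht, Finset.mem_filter, Set.Finite.mem_toFinset] at this
    exact this.1
  have hgbase : ∀ e : ↥B, M.IsBase (insert (g e) (B \ {(e : α)})) := by
    intro e
    have := hgmem e
    simp only [ht, Finset.mem_filter, Set.Finite.mem_toFinset] at this
    exact this.2
  refine ⟨fun e => ⟨g e, hgB' e⟩, ?_, fun e => hgbase e⟩
  have hinj : Function.Injective (fun e : ↥B => (⟨g e, hgB' e⟩ : ↥B')) := by
    intro x y hxy
    exact hginj (congrArg Subtype.val hxy)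
  rw [Fintype.bijective_iff_injective_and_card]
  refine ⟨hinj, ?_⟩
  rw [← Nat.card_eq_fintype_card, ← Nat.card_eq_fintype_card,
    Nat.card_coe_set_eq, Nat.card_coe_set_eq]
  exact hB.ncard_eq_ncard_of_isBase hB'
end

section
/- Let M be a matroid on a finite ground set E, let F ⊆ E, and let B and B' be bases of M. Let σ be a bijection from B to B' such that for every e ∈ B the set (B \ {e}) ∪ {σ(e)} is a basis of M. Assume |B ∩ F| = rk(F). Then rk(F) − |B' ∩ F| = |{e ∈ B : e ∈ F and σ(e) ∉ F}|. -/
/-- The rank of a subset `F` in a matroid `M`: the largest cardinality of an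
independent set contained in `F`. -/
noncomputable def matroidRk {α : Type*} (M : Matroid α) (F : Set α) : ℕ :=
  sSup {n : ℕ | ∃ I : Set α, M.Indep I ∧ I ⊆ F ∧ I.ncard = n}

theorem matroidRk_ge_aux {α : Type*} (M : Matroid α) (hE : M.E.Finite) (F : Set α)
    {I : Set α} (hI : M.Indep I) (hIF : I ⊆ F) : I.ncard ≤ matroidRk M F := by
  apply le_csSup
  · refine ⟨M.E.ncard, ?_⟩
    rintro n ⟨J, hJ, hJF, rfl⟩
    exact Set.ncard_le_ncard hJ.subset_ground hE
  · exact ⟨I, hI, hIF, rfl⟩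

/-- **Lemma 3.** Let `B, B'` be bases of `M`, let `σ : B → B'` be a bijection such that
`(B \ {e}) ∪ {σ(e)}` is a basis for every `e ∈ B`, and assume `|B ∩ F| = rk(F)`. Then
`rk(F) − |B' ∩ F| = |{e ∈ B : e ∈ F and σ(e) ∉ F}|`. -/
theorem slack_eq_card_exchange {α : Type*} (M : Matroid α) (hE : M.E.Finite)
    (F : Set α) (hF : F ⊆ M.E) (B B' : Set α) (hB : M.IsBase B) (hB' : M.IsBase B')
    (σ : B → B') (hσ : Function.Bijective σ)
    (hexch : ∀ e : B, M.IsBase (insert ((σ e : α)) (B \ {(e : α)})))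
    (hBF : (B ∩ F).ncard = matroidRk M F) :
    matroidRk M F - (B' ∩ F).ncard
      = {e : B | (e : α) ∈ F ∧ (σ e : α) ∉ F}.ncard := by
  have hBfin : B.Finite := hE.subset hB.subset_ground
  have hB'fin : B'.Finite := hE.subset hB'.subset_ground
  haveI := hBfin.to_subtype
  haveI := hB'fin.to_subtype
  -- no element leaves F-complement into F
  have hU : ∀ e : B, (e : α) ∉ F → (σ e : α) ∈ F → False := by
    intro e heF hσeF
    have hbase := hexch e
    have hσeB : (σ e : α) ∉ B := by
      intro h
      have hne : (σ e : α) ≠ (e : α) := by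
        rintro h'; rw [h'] at hσeF; exact heF hσeF
      have hsub : insert ((σ e : α)) (B \ {(e : α)}) ⊆ B := by
        rintro x (rfl | ⟨hxB, _⟩)
        · exact h
        · exact hxB
      have heq := hbase.eq_of_subset_isBase hB hsub
      have hmem : (e : α) ∈ insert ((σ e : α)) (B \ {(e : α)}) := by rw [heq]; exact e.2
      rcases hmem with h' | ⟨_, h'⟩
      · exact hne h'.symm
      · exact h' rfl
    have hEq : insert ((σ e : α)) (B \ {(e : α)}) ∩ F = insert ((σ e : α)) (B ∩ F) := by
      ext x
      constructor
      · rintro ⟨(rfl | ⟨hxB, hxe⟩), hxF⟩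
        · exact Or.inl rfl
        · exact Or.inr ⟨hxB, hxF⟩
      · rintro (rfl | ⟨hxB, hxF⟩)
        · exact ⟨Or.inl rfl, hσeF⟩
        · refine ⟨Or.inr ⟨hxB, ?_⟩, hxF⟩
          rintro rfl; exact heF hxF
    have hind : M.Indep (insert ((σ e : α)) (B \ {(e : α)}) ∩ F) :=
      hbase.indep.subset Set.inter_subset_left
    have hle := matroidRk_ge_aux M hE F hind Set.inter_subset_right
    rw [hEq, Set.ncard_insert_of_notMem (fun h => hσeB h.1)
      (hBfin.subset Set.inter_subset_left), hBF] at hle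
    omega
  set S := {e : B | (e : α) ∈ F ∧ (σ e : α) ∉ F} with hS
  set T := {e : B | (e : α) ∈ F ∧ (σ e : α) ∈ F} with hT
  have h1 : (B ∩ F).ncard = S.ncard + T.ncard := by
    have himg : Subtype.val '' {e : B | (e : α) ∈ F} = B ∩ F := by
      ext x
      constructor
      · rintro ⟨e, he, rfl⟩; exact ⟨e.2, he⟩
      · rintro ⟨hxB, hxF⟩; exact ⟨⟨x, hxB⟩, hxF, rfl⟩
    rw [← himg, Set.ncard_image_of_injective _ Subtype.val_injective]
    have hST : {e : B | (e : α) ∈ F} = S ∪ T := by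
      ext e
      by_cases h : (σ e : α) ∈ F <;> simp [hS, hT, h]
    rw [hST, Set.ncard_union_eq (Set.disjoint_left.mpr fun e he1 he2 => he1.2 he2.2)
      (Set.toFinite _) (Set.toFinite _)]
  have h2 : (B' ∩ F).ncard = T.ncard := by
    have himg' : Subtype.val '' {e' : B' | (e' : α) ∈ F} = B' ∩ F := by
      ext x
      constructor
      · rintro ⟨e, he, rfl⟩; exact ⟨e.2, he⟩
      · rintro ⟨hxB, hxF⟩; exact ⟨⟨x, hxB⟩, hxF, rfl⟩
    have hσimg : σ '' {e : B | (σ e : α) ∈ F} = {e' : B' | (e' : α) ∈ F} := by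
      ext e'
      constructor
      · rintro ⟨e, he, rfl⟩; exact he
      · intro h
        obtain ⟨e, rfl⟩ := hσ.2 e'
        exact ⟨e, h, rfl⟩
    have hTU : {e : B | (σ e : α) ∈ F} = T := by
      ext e
      constructor
      · intro h
        refine ⟨?_, h⟩
        by_contra heF
        exact hU e heF h
      · exact fun h => h.2
    rw [← himg', Set.ncard_image_of_injective _ Subtype.val_injective, ← hσimg,
      Set.ncard_image_of_injective _ hσ.1, hTU]
  rw [← hBF, h1, h2]
  omega
end

section
/- Let n ≥ 2 and fix a vertex v₀ of the complete graph K_n. Then the family of n − 1 spanning trees {δ(u) : u ∈ V(K_n), u ≠ v₀} has the following property: for every subset U of V(K_n) with |U| ≥ 2, there exists u ∈ U with u ≠ v₀ such that |δ(u) ∩ E(U)| = |U| − 1. -/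
/-- **Hitting family of stars.** Fix `n ≥ 2` and a vertex `v₀` of `K_n`. The family of
`n − 1` spanning trees `{δ(u) : u ≠ v₀}` hits every facet: for every vertex subset `U`
with `|U| ≥ 2` there is `u ∈ U`, `u ≠ v₀`, whose star meets the set `E(U)` of edges
with both endpoints in `U` in exactly `|U| − 1` edges. -/
theorem stars_hitting_family (n : ℕ) (hn : 2 ≤ n) (v₀ : Fin n)
    (U : Set (Fin n)) (hU : 2 ≤ U.ncard) :
    ∃ u ∈ U, u ≠ v₀ ∧
      ((⊤ : SimpleGraph (Fin n)).incidenceSet u ∩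
          {e ∈ (⊤ : SimpleGraph (Fin n)).edgeSet | ∀ v ∈ e, v ∈ U}).ncard
        = U.ncard - 1 := by
  have hfin : U.Finite := Set.toFinite U
  obtain ⟨u, hu, hune⟩ : ∃ u ∈ U, u ≠ v₀ := by
    by_contra h
    push_neg at h
    have hsub : U ⊆ {v₀} := fun x hx => h x hx
    have := Set.ncard_le_ncard hsub (Set.finite_singleton _)
    rw [Set.ncard_singleton] at this
    omega
  refine ⟨u, hu, hune, ?_⟩
  have hset : ((⊤ : SimpleGraph (Fin n)).incidenceSet u ∩
      {e ∈ (⊤ : SimpleGraph (Fin n)).edgeSet | ∀ v ∈ e, v ∈ U})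
      = (fun w => s(u, w)) '' (U \ {u}) := by
    ext e
    constructor
    · rintro ⟨⟨he, hue⟩, -, hall⟩
      obtain ⟨w, rfl⟩ := Sym2.mem_iff_exists.mp hue
      refine ⟨w, ⟨hall w (by simp), ?_⟩, rfl⟩
      simp only [SimpleGraph.mem_edgeSet, SimpleGraph.top_adj] at he
      simp [he.symm]
    · rintro ⟨w, ⟨hwU, hwne⟩, rfl⟩
      simp only [Set.mem_singleton_iff] at hwne
      refine ⟨⟨?_, by simp⟩, ?_, ?_⟩
      · simp [SimpleGraph.mem_edgeSet]; exact fun h => hwne h.symm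
      · simp [SimpleGraph.mem_edgeSet]; exact fun h => hwne h.symm
      · intro v hv
        rcases Sym2.mem_iff.mp hv with rfl | rfl
        · exact hu
        · exact hwU
  rw [hset, Set.ncard_image_of_injOn, Set.ncard_diff_singleton_of_mem hu]
  intro a ha b hb hab
  simp only [Sym2.eq, Sym2.rel_iff', Prod.mk.injEq, Prod.swap_prod_mk] at hab
  rcases hab with ⟨-, rfl⟩ | ⟨rfl, rfl⟩
  · rfl
  · exact absurd rfl ha.2
end
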